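/- arXiv:1409.5015 — 5 statements merged into one kernel-verified Lean document; each statement's English description precedes it below -/
import Mathlib

section
/- Let E be a real inner product space, W a finite-dimensional subspace, x ∈ E, v : Fin n → E, and let b* be feasible (x − ∑ i, b* i • v i ∈ Wᗮ). Then b* minimizes ‖x − ∑ i, b i • v i‖ over all feasible b if and only if the error ε* := x − ∑ i, b* i • v i satisfies ⟪ε*, ∑ i, d i • (v i − P_W (v i))⟫ = 0 for every d : Fin n → ℝ with ∑ i, d i • P_W (v i) = 0. -/
open scoped RealInnerProductSpace

private lemma perp_of_min {E : Type*} [NormedAddCommGroup E] [InnerProductSpace ℝ E]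
    (e s : E) (h : ∀ t : ℝ, ‖e‖ ≤ ‖e + t • s‖) : ⟪e, s⟫ = 0 := by
  by_contra ha
  set a : ℝ := ⟪e, s⟫ with hA
  set t : ℝ := -a / (‖s‖ ^ 2 + 1) with ht
  have h1 := h t
  have h2 : ‖e‖ ^ 2 ≤ ‖e + t • s‖ ^ 2 := by
    have := norm_nonneg e
    nlinarith [norm_nonneg (e + t • s)]
  rw [norm_add_sq_real, real_inner_smul_right, norm_smul] at h2
  simp only [Real.norm_eq_abs, mul_pow, sq_abs] at h2
  have hs : (0:ℝ) < ‖s‖ ^ 2 + 1 := by positivity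
  have ha2 : 0 < a ^ 2 := by positivity
  rw [ht, ← hA] at h2
  have h3 : (0:ℝ) ≤ 2 * (-a / (‖s‖ ^ 2 + 1) * a) + (-a / (‖s‖ ^ 2 + 1)) ^ 2 * ‖s‖ ^ 2 := by
    linarith
  have hs2 : (0:ℝ) < (‖s‖ ^ 2 + 1) ^ 2 := by positivity
  have h4 : (0:ℝ) ≤ (2 * (-a / (‖s‖ ^ 2 + 1) * a) + (-a / (‖s‖ ^ 2 + 1)) ^ 2 * ‖s‖ ^ 2)
      * (‖s‖ ^ 2 + 1) ^ 2 := mul_nonneg h3 hs2.le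
  have h5 : (2 * (-a / (‖s‖ ^ 2 + 1) * a) + (-a / (‖s‖ ^ 2 + 1)) ^ 2 * ‖s‖ ^ 2)
      * (‖s‖ ^ 2 + 1) ^ 2 = -(a ^ 2) * (‖s‖ ^ 2 + 1) * 2 + a ^ 2 * ‖s‖ ^ 2 := by
    field_simp
  nlinarith [sq_nonneg ‖s‖]

theorem stmt_6 {E : Type*} [NormedAddCommGroup E] [InnerProductSpace ℝ E]
    (W : Submodule ℝ E) [FiniteDimensional ℝ W] {n : ℕ}
    (x : E) (v : Fin n → E) (bs : Fin n → ℝ)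
    (hbs : x - ∑ i, bs i • v i ∈ Wᗮ) :
    (∀ b : Fin n → ℝ, x - ∑ i, b i • v i ∈ Wᗮ →
      ‖x - ∑ i, bs i • v i‖ ≤ ‖x - ∑ i, b i • v i‖) ↔
    (∀ d : Fin n → ℝ, ∑ i, d i • Submodule.orthogonalProjection W (v i) = 0 →
      ⟪x - ∑ i, bs i • v i,
        ∑ i, d i • (v i - (Submodule.orthogonalProjection W (v i) : E))⟫ = 0) := by
  set e : E := x - ∑ i, bs i • v i with he
  have hproj : ∀ d : Fin n → ℝ,
      Submodule.orthogonalProjection W (∑ i, d i • v i) = ∑ i, d i • Submodule.orthogonalProjection W (v i) := by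
    intro d; simp [map_sum, map_smul]
  have hmem : ∀ d : Fin n → ℝ,
      (∑ i, d i • Submodule.orthogonalProjection W (v i) = 0) ↔ (∑ i, d i • v i ∈ Wᗮ) := by
    intro d; rw [← hproj]; exact Submodule.orthogonalProjectionOnto_eq_zero_iff
  have hrw : ∀ d : Fin n → ℝ, ∑ i, d i • Submodule.orthogonalProjection W (v i) = 0 →
      ∑ i, d i • (v i - (Submodule.orthogonalProjection W (v i) : E)) = ∑ i, d i • v i := by
    intro d hd
    have : ∑ i, d i • (Submodule.orthogonalProjection W (v i) : E) = 0 := by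
      have := congrArg (Submodule.subtype W) hd
      simpa using this
    calc ∑ i, d i • (v i - (Submodule.orthogonalProjection W (v i) : E))
        = ∑ i, (d i • v i - d i • (Submodule.orthogonalProjection W (v i) : E)) := by
          simp [smul_sub]
      _ = ∑ i, d i • v i - ∑ i, d i • (Submodule.orthogonalProjection W (v i) : E) := by
          rw [Finset.sum_sub_distrib]
      _ = ∑ i, d i • v i := by rw [this, sub_zero]
  constructor
  · intro hmin d hd
    rw [hrw d hd]
    have hsmem : ∑ i, d i • v i ∈ Wᗮ := (hmem d).mp hd
    apply perp_of_min
    intro t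
    have hkey : x - ∑ i, (bs i - t * d i) • v i = e + t • ∑ i, d i • v i := by
      have h1 : ∑ i, (bs i - t * d i) • v i
          = ∑ i, (bs i • v i - t • (d i • v i)) :=
        Finset.sum_congr rfl (fun i _ => by rw [sub_smul, smul_smul])
      rw [he, Finset.smul_sum, h1, Finset.sum_sub_distrib]
      abel
    have hfeas : x - ∑ i, (bs i - t * d i) • v i ∈ Wᗮ := by
      rw [hkey]
      exact Wᗮ.add_mem hbs (Wᗮ.smul_mem t hsmem)
    have hle := hmin (fun i => bs i - t * d i) hfeas
    rw [show ∑ i, (fun i => bs i - t * d i) i • v i = ∑ i, (bs i - t * d i) • v i from rfl,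
      hkey] at hle
    exact hle
  · intro hperp b hb
    set d : Fin n → ℝ := fun i => bs i - b i with hd
    have hsum : x - ∑ i, b i • v i = e + ∑ i, d i • v i := by
      have h1 : ∑ i, d i • v i = ∑ i, (bs i • v i - b i • v i) :=
        Finset.sum_congr rfl (fun i _ => by rw [hd]; rw [sub_smul])
      rw [he, h1, Finset.sum_sub_distrib]
      abel
    have hsmem : ∑ i, d i • v i ∈ Wᗮ := by
      have : (∑ i, d i • v i) = (x - ∑ i, b i • v i) - e := by rw [hsum]; abel
      rw [this]
      exact Wᗮ.sub_mem hb hbs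
    have hdz : ∑ i, d i • Submodule.orthogonalProjection W (v i) = 0 := (hmem d).mpr hsmem
    have hip : ⟪e, ∑ i, d i • v i⟫ = 0 := by
      have := hperp d hdz
      rwa [hrw d hdz] at this
    rw [hsum]
    have hsq : ‖e + ∑ i, d i • v i‖ ^ 2 = ‖e‖ ^ 2 + ‖∑ i, d i • v i‖ ^ 2 := by
      rw [norm_add_sq_real, hip]; ring
    nlinarith [norm_nonneg (e + ∑ i, d i • v i), norm_nonneg e, sq_nonneg ‖∑ i, d i • v i‖]
end

section
/- Let E be a real inner product space, v : Fin n → E, U := span ℝ (range v), x ∈ E, and y := x − P_U x. Define U₁ := span ℝ (range (fun i => v i − P_{ℝ∙y} (v i))) and U₂ := span ℝ (range (fun i => v i − P_{ℝ∙x} (v i))). Then for all ν, w ∈ E, writing ν₁ := ν − P_{ℝ∙y} ν and ν₂ := ν − P_{ℝ∙x} ν, one has ⟪ν₁ − P_{U₁} ν₁, w⟫ = ⟪ν₂ − P_{U₂} ν₂, w⟫. -/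
open Submodule
open scoped RealInnerProductSpace

instance spanRangeFiniteDimensional {E : Type*} [NormedAddCommGroup E]
    [InnerProductSpace ℝ E] {n : ℕ} (v : Fin n → E) :
    FiniteDimensional ℝ (Submodule.span ℝ (Set.range v)) :=
  FiniteDimensional.span_of_finite ℝ (Set.finite_range v)

section Aux

variable {E : Type*} [NormedAddCommGroup E] [InnerProductSpace ℝ E]

/-- double complement projection equals projection onto complement of the sup. -/
lemma aux_key (a : E) (S : Submodule ℝ E) [FiniteDimensional ℝ S]
    (hS : S ≤ (ℝ ∙ a)ᗮ) (ν : E) :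
    (ν - (orthogonalProjection (ℝ ∙ a) ν : E)) -
      (orthogonalProjection S (ν - (orthogonalProjection (ℝ ∙ a) ν : E)) : E) =
    ν - (orthogonalProjection ((ℝ ∙ a) ⊔ S) ν : E) := by
  set p : E := (orthogonalProjection (ℝ ∙ a) ν : E) with hp
  set q : E := (orthogonalProjection S (ν - p) : E) with hq
  have hproj : (orthogonalProjection ((ℝ ∙ a) ⊔ S) ν : E) = p + q := by
    apply eq_starProjection_of_mem_orthogonal (K := (ℝ ∙ a) ⊔ S)
    · exact Submodule.add_mem _ (Submodule.mem_sup_left (orthogonalProjection (ℝ ∙ a) ν).2)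
        (Submodule.mem_sup_right (orthogonalProjection S (ν - p)).2)
    · rw [← Submodule.inf_orthogonal]
      constructor
      · have h1 : ν - p ∈ (ℝ ∙ a)ᗮ := sub_starProjection_mem_orthogonal ν
        have h2 : q ∈ (ℝ ∙ a)ᗮ := hS (orthogonalProjection S (ν - p)).2
        have : ν - (p + q) = (ν - p) - q := by abel
        rw [this]
        exact Submodule.sub_mem _ h1 h2
      · have h1 : (ν - p) - q ∈ Sᗮ := sub_starProjection_mem_orthogonal (ν - p)
        have : ν - (p + q) = (ν - p) - q := by abel
        rw [this]; exact h1
  rw [hproj]; abel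

lemma proj_congr {K K' : Submodule ℝ E} [CompleteSpace K]
    [CompleteSpace K'] (h : K = K') (ν : E) :
    (orthogonalProjection K ν : E) = (orthogonalProjection K' ν : E) := by
  subst h; rfl

lemma aux_sup (a : E) {n : ℕ} (v : Fin n → E) :
    (ℝ ∙ a) ⊔ Submodule.span ℝ
        (Set.range (fun i => v i - (orthogonalProjection (ℝ ∙ a) (v i) : E))) =
      (ℝ ∙ a) ⊔ Submodule.span ℝ (Set.range v) := by
  apply le_antisymm
  · apply sup_le le_sup_left
    rw [Submodule.span_le]
    rintro _ ⟨i, rfl⟩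
    have h1 : v i ∈ (ℝ ∙ a) ⊔ Submodule.span ℝ (Set.range v) :=
      Submodule.mem_sup_right (Submodule.subset_span ⟨i, rfl⟩)
    have h2 : (orthogonalProjection (ℝ ∙ a) (v i) : E) ∈
        (ℝ ∙ a) ⊔ Submodule.span ℝ (Set.range v) :=
      Submodule.mem_sup_left (orthogonalProjection (ℝ ∙ a) (v i)).2
    exact Submodule.sub_mem _ h1 h2
  · apply sup_le le_sup_left
    rw [Submodule.span_le]
    rintro _ ⟨i, rfl⟩
    have h1 : v i - (orthogonalProjection (ℝ ∙ a) (v i) : E) ∈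
        (ℝ ∙ a) ⊔ Submodule.span ℝ
          (Set.range (fun j => v j - (orthogonalProjection (ℝ ∙ a) (v j) : E))) :=
      Submodule.mem_sup_right (Submodule.subset_span ⟨i, rfl⟩)
    have h2 : (orthogonalProjection (ℝ ∙ a) (v i) : E) ∈
        (ℝ ∙ a) ⊔ Submodule.span ℝ
          (Set.range (fun j => v j - (orthogonalProjection (ℝ ∙ a) (v j) : E))) :=
      Submodule.mem_sup_left (orthogonalProjection (ℝ ∙ a) (v i)).2
    have := Submodule.add_mem _ h1 h2
    simpa using this

end Aux

theorem stmt_11 {E : Type*} [NormedAddCommGroup E] [InnerProductSpace ℝ E]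
    {n : ℕ} (v : Fin n → E) (x : E) (y : E)
    (hy : y = x - (orthogonalProjection (Submodule.span ℝ (Set.range v)) x : E)) :
    ∀ ν w : E,
      ⟪(ν - (orthogonalProjection (ℝ ∙ y) ν : E)) -
          (orthogonalProjection
            (Submodule.span ℝ
              (Set.range (fun i => v i - (orthogonalProjection (ℝ ∙ y) (v i) : E))))
            (ν - (orthogonalProjection (ℝ ∙ y) ν : E)) : E), w⟫ =
      ⟪(ν - (orthogonalProjection (ℝ ∙ x) ν : E)) -
          (orthogonalProjection
            (Submodule.span ℝ
              (Set.range (fun i => v i - (orthogonalProjection (ℝ ∙ x) (v i) : E))))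
            (ν - (orthogonalProjection (ℝ ∙ x) ν : E)) : E), w⟫ := by
  intro ν w
  have hSy : Submodule.span ℝ
      (Set.range (fun i => v i - (orthogonalProjection (ℝ ∙ y) (v i) : E))) ≤ (ℝ ∙ y)ᗮ := by
    rw [Submodule.span_le]
    rintro _ ⟨i, rfl⟩
    exact sub_starProjection_mem_orthogonal (v i)
  have hSx : Submodule.span ℝ
      (Set.range (fun i => v i - (orthogonalProjection (ℝ ∙ x) (v i) : E))) ≤ (ℝ ∙ x)ᗮ := by
    rw [Submodule.span_le]
    rintro _ ⟨i, rfl⟩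
    exact sub_starProjection_mem_orthogonal (v i)
  rw [aux_key y _ hSy ν, aux_key x _ hSx ν]
  have hsup : (ℝ ∙ y) ⊔ Submodule.span ℝ (Set.range v) =
      (ℝ ∙ x) ⊔ Submodule.span ℝ (Set.range v) := by
    set U := Submodule.span ℝ (Set.range v)
    have hpx : (orthogonalProjection U x : E) ∈ U := (orthogonalProjection U x).2
    apply le_antisymm
    · apply sup_le _ le_sup_right
      rw [Submodule.span_le, Set.singleton_subset_iff]
      rw [hy]
      exact Submodule.sub_mem _ (Submodule.mem_sup_left (Submodule.mem_span_singleton_self x))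
        (Submodule.mem_sup_right hpx)
    · apply sup_le _ le_sup_right
      rw [Submodule.span_le, Set.singleton_subset_iff]
      have : x = y + (orthogonalProjection U x : E) := by rw [hy]; abel
      rw [this]
      exact Submodule.add_mem _ (Submodule.mem_sup_left (Submodule.mem_span_singleton_self y))
        (Submodule.mem_sup_right hpx)
  have heq : (ℝ ∙ y) ⊔ Submodule.span ℝ
        (Set.range (fun i => v i - (orthogonalProjection (ℝ ∙ y) (v i) : E))) =
      (ℝ ∙ x) ⊔ Submodule.span ℝ
        (Set.range (fun i => v i - (orthogonalProjection (ℝ ∙ x) (v i) : E))) := by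
    rw [aux_sup y v, aux_sup x v, hsup]
  rw [proj_congr heq ν]
end

section
/- Let E be a real inner product space, U a finite-dimensional subspace of E, x ∈ E, and y := x − P_U x. Then for all ν, w ∈ E: ⟪ν − P_{U ⊔ ℝ∙x} ν, w⟫ = ⟪ν − P_U ν, w⟫ − ⟪P_{ℝ∙y} ν, w⟫. -/
open Submodule
open scoped RealInnerProductSpace

theorem stmt_12 {E : Type*} [NormedAddCommGroup E] [InnerProductSpace ℝ E]
    (U : Submodule ℝ E) [FiniteDimensional ℝ U] (x : E) (y : E)
    (hy : y = x - (orthogonalProjection U x : E)) :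
    ∀ ν w : E,
      ⟪ν - (orthogonalProjection (U ⊔ (ℝ ∙ x)) ν : E), w⟫ =
        ⟪ν - (orthogonalProjection U ν : E), w⟫ -
          ⟪(orthogonalProjection (ℝ ∙ y) ν : E), w⟫ := by
  intro ν w
  have hyU : y ∈ Uᗮ := by
    rw [hy]; exact sub_starProjection_mem_orthogonal x
  have hxmem : x ∈ U ⊔ (ℝ ∙ y) := by
    have hx : x = (orthogonalProjection U x : E) + y := by rw [hy]; abel
    rw [hx]
    exact add_mem (mem_sup_left (coe_mem _)) (mem_sup_right (mem_span_singleton_self y))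
  have hymem : y ∈ U ⊔ (ℝ ∙ x) := by
    rw [hy]
    exact sub_mem (mem_sup_right (mem_span_singleton_self x)) (mem_sup_left (coe_mem _))
  have hsup : U ⊔ (ℝ ∙ x) = U ⊔ (ℝ ∙ y) := by
    apply le_antisymm
    · exact sup_le le_sup_left ((span_singleton_le_iff_mem _ _).mpr hxmem)
    · exact sup_le le_sup_left ((span_singleton_le_iff_mem _ _).mpr hymem)
  have key : (orthogonalProjection (U ⊔ (ℝ ∙ x)) ν : E) =
      (orthogonalProjection U ν : E) + (orthogonalProjection (ℝ ∙ y) ν : E) := by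
    apply eq_starProjection_of_mem_of_inner_eq_zero
    · rw [hsup]
      exact add_mem (mem_sup_left (coe_mem _)) (mem_sup_right (coe_mem _))
    · intro z hz
      rw [hsup] at hz
      obtain ⟨u, hu, v, hv, rfl⟩ := mem_sup.mp hz
      obtain ⟨c, rfl⟩ := mem_span_singleton.mp hv
      obtain ⟨d, hd⟩ := mem_span_singleton.mp
        (coe_mem (orthogonalProjection (ℝ ∙ y) ν))
      have h1 : ⟪ν, u⟫ = ⟪(orthogonalProjection U ν : E), u⟫ := by
        have := starProjection_inner_eq_zero ν u hu
        rwa [inner_sub_left, sub_eq_zero] at this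
      have h2 : ⟪ν, y⟫ = ⟪(orthogonalProjection (ℝ ∙ y) ν : E), y⟫ := by
        have := starProjection_inner_eq_zero (K := (ℝ ∙ y)) ν y (mem_span_singleton_self y)
        rwa [inner_sub_left, sub_eq_zero] at this
      have h3 : ⟪(orthogonalProjection (ℝ ∙ y) ν : E), u⟫ = 0 := by
        rw [← hd, real_inner_smul_left]
        have h := hyU u hu
        rw [real_inner_comm] at h
        rw [h, mul_zero]
      have h4 : ⟪(orthogonalProjection U ν : E), y⟫ = 0 := by
        have h := hyU _ (coe_mem (orthogonalProjection U ν))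
        exact h
      simp only [inner_sub_left, inner_add_left, inner_add_right, real_inner_smul_right, h1, h2, h3, h4]
      ring
  rw [key, inner_sub_left, inner_sub_left, inner_add_left]
  ring
end

section
/- Let E be a real inner product space, U a finite-dimensional subspace of E, and v ∈ E with v ∉ U (equivalently v − P_U v ≠ 0). Then for all ν, w ∈ E: ⟪ν − P_{U ⊔ ℝ∙v} ν, w⟫ = ⟪ν − P_U ν, w⟫ − (⟪ν − P_U ν, v⟫ * ⟪v − P_U v, w⟫) / ⟪v − P_U v, v⟫, where the denominator ⟪v − P_U v, v⟫ = ‖v − P_U v‖² is nonzero. -/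
open Submodule
open scoped RealInnerProductSpace

theorem stmt_13 {E : Type*} [NormedAddCommGroup E] [InnerProductSpace ℝ E]
    (U : Submodule ℝ E) [FiniteDimensional ℝ U] (v : E) (hv : v ∉ U) :
    ⟪v - (orthogonalProjection U v : E), v⟫ = ‖v - (orthogonalProjection U v : E)‖ ^ 2 ∧
    ⟪v - (orthogonalProjection U v : E), v⟫ ≠ 0 ∧
    ∀ ν w : E,
      ⟪ν - (orthogonalProjection (U ⊔ (ℝ ∙ v)) ν : E), w⟫ =
        ⟪ν - (orthogonalProjection U ν : E), w⟫ -
          ⟪ν - (orthogonalProjection U ν : E), v⟫ *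
              ⟪v - (orthogonalProjection U v : E), w⟫ /
            ⟪v - (orthogonalProjection U v : E), v⟫ := by
  set e : E := v - (orthogonalProjection U v : E) with he_def
  have he : e ∈ Uᗮ := U.sub_starProjection_mem_orthogonal v
  have he0 : e ≠ 0 := by
    intro h
    apply hv
    have : v = (orthogonalProjection U v : E) := by
      have := sub_eq_zero.mp h
      exact this
    rw [this]; exact (orthogonalProjection U v).2
  have hee : ⟪e, e⟫ ≠ 0 := by
    simpa [real_inner_self_eq_norm_sq] using pow_ne_zero 2 (norm_ne_zero_iff.mpr he0)
  have hev : ⟪e, v⟫ = ⟪e, e⟫ := by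
    have : ⟪e, (orthogonalProjection U v : E)⟫ = 0 := by
      rw [real_inner_comm]; exact he _ (orthogonalProjection U v).2
    rw [show v = e + (orthogonalProjection U v : E) by simp [he_def], inner_add_right, this,
      add_zero]
  have hvv : ⟪e, v⟫ = ‖e‖ ^ 2 := by rw [hev, real_inner_self_eq_norm_sq]
  refine ⟨hvv, by rw [hvv] at hev ⊢; exact fun h => he0 (by simpa using h), ?_⟩
  intro ν w
  set f : E := ν - (orthogonalProjection U ν : E) with hf_def
  have hf : f ∈ Uᗮ := U.sub_starProjection_mem_orthogonal ν
  set c : ℝ := ⟪f, e⟫ / ⟪e, e⟫ with hc_def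
  have hfv : ⟪f, v⟫ = ⟪f, e⟫ := by
    have : ⟪f, (orthogonalProjection U v : E)⟫ = 0 := by
      rw [real_inner_comm]; exact hf _ (orthogonalProjection U v).2
    rw [show v = e + (orthogonalProjection U v : E) by simp [he_def], inner_add_right, this,
      add_zero]
  have hmem : (orthogonalProjection U ν : E) + c • e ∈ U ⊔ (ℝ ∙ v) := by
    apply Submodule.add_mem
    · exact Submodule.mem_sup_left (orthogonalProjection U ν).2
    · apply Submodule.smul_mem
      have hv' : v ∈ U ⊔ (ℝ ∙ v) := Submodule.mem_sup_right (Submodule.mem_span_singleton_self v)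
      have hp : (orthogonalProjection U v : E) ∈ U ⊔ (ℝ ∙ v) :=
        Submodule.mem_sup_left (orthogonalProjection U v).2
      exact Submodule.sub_mem _ hv' hp
  have horthU : ∀ u ∈ U, ⟪ν - ((orthogonalProjection U ν : E) + c • e), u⟫ = 0 := by
    intro u hu
    have h1 : ⟪f, u⟫ = 0 := by rw [real_inner_comm]; exact hf u hu
    have h2 : ⟪e, u⟫ = 0 := by rw [real_inner_comm]; exact he u hu
    have : ν - ((orthogonalProjection U ν : E) + c • e) = f - c • e := by
      rw [hf_def]; abel
    rw [this, inner_sub_left, inner_smul_left, h1, h2]; ring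
  have key : (orthogonalProjection (U ⊔ (ℝ ∙ v)) ν : E)
      = (orthogonalProjection U ν : E) + c • e := by
    apply (U ⊔ (ℝ ∙ v)).eq_starProjection_of_mem_of_inner_eq_zero hmem
    intro x hx
    rcases Submodule.mem_sup.mp hx with ⟨u, hu, y, hy, rfl⟩
    rcases Submodule.mem_span_singleton.mp hy with ⟨t, rfl⟩
    rw [inner_add_right, horthU u hu, zero_add, inner_smul_right]
    have hve : ⟪ν - ((orthogonalProjection U ν : E) + c • e), v⟫ = 0 := by
      have heq : ν - ((orthogonalProjection U ν : E) + c • e) = f - c • e := by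
        rw [hf_def]; abel
      rw [heq, inner_sub_left, real_inner_smul_left, hfv, hev, hc_def,
        div_mul_cancel₀ _ hee, sub_self]
    rw [hve, mul_zero]
  rw [key]
  have heq : ν - ((orthogonalProjection U ν : E) + c • e) = f - c • e := by
    rw [hf_def]; abel
  rw [heq, inner_sub_left, real_inner_smul_left, hc_def, hfv.symm, hev.symm]
  ring
end

section
/- Let E be a real inner product space and v : Fin (n+1) → E a linearly independent family. Let S := span ℝ {v i | (i : Fin (n+1)) (h : (i : ℕ) < n)} be the span of the first n vectors and S' := span ℝ (range v) the full span. Let z ∈ E, and suppose P_S z = ∑_{i < n} ā i • v i and P_S (v n) = ∑_{i < n} b i • v i. Set k := ⟪z − P_S z, v n⟫ / ‖v n − P_S (v n)‖² (the denominator is nonzero by linear independence). Then P_{S'} z = ∑_{i < n} (ā i − k * b i) • v i + k • v n. -/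
open scoped RealInnerProductSpace

instance spanImageFiniteDimensional {E : Type*} [NormedAddCommGroup E]
    [InnerProductSpace ℝ E] {m : ℕ} (v : Fin m → E) (s : Set (Fin m)) :
    FiniteDimensional ℝ (Submodule.span ℝ (v '' s)) :=
  FiniteDimensional.span_of_finite ℝ ((Set.toFinite s).image v)

theorem stmt_17 {E : Type*} [NormedAddCommGroup E] [InnerProductSpace ℝ E]
    {n : ℕ} (v : Fin (n + 1) → E) (hv : LinearIndependent ℝ v)
    (z : E) (abar b : Fin n → ℝ) (k : ℝ)
    (hz : (Submodule.orthogonalProjection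
        (Submodule.span ℝ (v '' {i : Fin (n + 1) | (i : ℕ) < n})) z : E) =
      ∑ i : Fin n, abar i • v i.castSucc)
    (hb : (Submodule.orthogonalProjection
        (Submodule.span ℝ (v '' {i : Fin (n + 1) | (i : ℕ) < n}))
          (v (Fin.last n)) : E) =
      ∑ i : Fin n, b i • v i.castSucc)
    (hk : k =
      ⟪z - (Submodule.orthogonalProjection
          (Submodule.span ℝ (v '' {i : Fin (n + 1) | (i : ℕ) < n})) z : E),
        v (Fin.last n)⟫ /
      ‖v (Fin.last n) - (Submodule.orthogonalProjection
          (Submodule.span ℝ (v '' {i : Fin (n + 1) | (i : ℕ) < n}))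
            (v (Fin.last n)) : E)‖ ^ 2) :
    (Submodule.orthogonalProjection (Submodule.span ℝ (Set.range v)) z : E) =
      ∑ i : Fin n, (abar i - k * b i) • v i.castSucc + k • v (Fin.last n) := by
  set S := Submodule.span ℝ (v '' {i : Fin (n + 1) | (i : ℕ) < n}) with hS
  set p : E := (Submodule.orthogonalProjection S z : E) with hp
  set q : E := (Submodule.orthogonalProjection S (v (Fin.last n)) : E) with hq
  set e : E := v (Fin.last n) - q with he
  set w : E := ∑ i : Fin n, (abar i - k * b i) • v i.castSucc + k • v (Fin.last n)
    with hwdef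
  have hqS : q ∈ S := (Submodule.orthogonalProjection S (v (Fin.last n))).2
  have heo : e ∈ Sᗮ := Submodule.sub_starProjection_mem_orthogonal _
  have hzo : z - p ∈ Sᗮ := Submodule.sub_starProjection_mem_orthogonal _
  -- e ≠ 0
  have hlast : v (Fin.last n) ∉ S := by
    rw [hS]
    exact hv.notMem_span_image (by simp)
  have hene : e ≠ 0 := by
    intro h
    exact hlast (by rw [show v (Fin.last n) = q by rwa [he, sub_eq_zero] at h]; exact hqS)
  have hnorm : (‖e‖ : ℝ) ^ 2 ≠ 0 := pow_ne_zero _ (norm_ne_zero_iff.2 hene)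
  -- w = p + k • e
  have hw : w = p + k • e := by
    rw [hwdef, he, hz, hb]
    simp only [sub_smul, Finset.sum_sub_distrib, smul_sub, Finset.smul_sum, smul_smul]
    abel
  have hzw : z - w ∈ Sᗮ := by
    have : z - w = (z - p) - k • e := by rw [hw]; abel
    rw [this]
    exact Submodule.sub_mem _ hzo (Submodule.smul_mem _ k heo)
  have hke : k * ‖e‖ ^ 2 = ⟪z - p, v (Fin.last n)⟫ := by
    rw [hk]
    field_simp
  have hin : ⟪e, v (Fin.last n)⟫ = ‖e‖ ^ 2 := by
    have hq0 : ⟪e, q⟫ = 0 := real_inner_comm e q ▸ heo q hqS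
    have : v (Fin.last n) = e + q := by rw [he]; abel
    rw [this, inner_add_right, hq0, real_inner_self_eq_norm_sq, add_zero]
  refine Submodule.eq_starProjection_of_mem_of_inner_eq_zero ?_ ?_
  · refine Submodule.add_mem _ (Submodule.sum_mem _ fun i _ => Submodule.smul_mem _ _ ?_)
      (Submodule.smul_mem _ _ ?_)
    · exact Submodule.subset_span ⟨i.castSucc, rfl⟩
    · exact Submodule.subset_span ⟨Fin.last n, rfl⟩
  · intro u hu
    induction hu using Submodule.span_induction with
    | mem x hx =>
      obtain ⟨j, rfl⟩ := hx
      induction j using Fin.lastCases with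
      | last =>
        have : z - w = (z - p) - k • e := by rw [hw]; abel
        rw [this, inner_sub_left, real_inner_smul_left, hin, hke, sub_self]
      | cast i =>
        have hmem : v i.castSucc ∈ S := by
          refine Submodule.subset_span ⟨i.castSucc, ?_, rfl⟩
          simp
        rw [real_inner_comm]
        exact hzw _ hmem
    | zero => simp
    | add x y hx hy ihx ihy => rw [inner_add_right, ihx, ihy, add_zero]
    | smul c x hx ihx => rw [inner_smul_right, ihx, mul_zero]
end
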